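/- arXiv:1501.02901 — 2 statements merged into one kernel-verified Lean document; each statement's English description precedes it below -/
import Mathlib

section
/- Let X be a topological space, Y a perfectly normal space, 0 ≤ α < ω₁, and let (fₙ) be a sequence of mappings of the α'th functionally Lebesgue class (preimages of open sets belong to the α'th functionally additive class) converging pointwise to f : X → Y. Then f is of the (α+1)'th functionally Lebesgue class; in particular, for every closed F ⊆ Y written as F = ⋂ₙ Gₙ = ⋂ₙ closure(Gₙ) with Gₙ open decreasing, one has f⁻¹(F) = ⋂ₙ ⋃_{k>n} f_k⁻¹(Gₙ), a set of the (α+1)'th functionally multiplicative class. -/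
open Set Topology Ordinal

/-- A family of sets is discrete if every point has an open neighborhood
meeting at most one member of the family. -/
def DiscreteFam {X I : Type*} [TopologicalSpace X] (U : I → Set X) : Prop :=
  ∀ x : X, ∃ V : Set X, IsOpen V ∧ x ∈ V ∧
    ∀ i j : I, (V ∩ U i).Nonempty → (V ∩ U j).Nonempty → i = j

/-- A set is functionally closed (a zero set) if it is the preimage of `{0}`
under a continuous real-valued function. -/
def FunClosed {X : Type*} [TopologicalSpace X] (F : Set X) : Prop :=
  ∃ f : X → ℝ, Continuous f ∧ F = f ⁻¹' {0}

/-- A set is functionally open if its complement is functionally closed. -/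
def FunOpen {X : Type*} [TopologicalSpace X] (U : Set X) : Prop :=
  FunClosed Uᶜ

/-- The pair (α'th functionally multiplicative class, α'th functionally additive class),
defined by transfinite recursion. -/
noncomputable def FunClassPair (X : Type*) [TopologicalSpace X] (α : Ordinal) :
    Set (Set X) × Set (Set X) :=
  if α = 0 then ({F | FunClosed F}, {U | FunOpen U})
  else
    ({ A | ∃ f : ℕ → Set X, (∀ n, ∃ β, ∃ _ : β < α, f n ∈ (FunClassPair X β).2) ∧ A = ⋂ n, f n },
     { A | ∃ f : ℕ → Set X, (∀ n, ∃ β, ∃ _ : β < α, f n ∈ (FunClassPair X β).1) ∧ A = ⋃ n, f n })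
termination_by α

/-- The α'th functionally multiplicative class. -/
noncomputable def FunMul (X : Type*) [TopologicalSpace X] (α : Ordinal) : Set (Set X) :=
  (FunClassPair X α).1

/-- The α'th functionally additive class. -/
noncomputable def FunAdd (X : Type*) [TopologicalSpace X] (α : Ordinal) : Set (Set X) :=
  (FunClassPair X α).2

/-- Functionally ambiguous sets of class α. -/
noncomputable def FunAmb {X : Type*} [TopologicalSpace X] (α : Ordinal) (A : Set X) : Prop :=
  A ∈ FunAdd X α ∧ A ∈ FunMul X α

/-- A family is strongly functionally discrete (sfd). -/
def SFDFam {X I : Type*} [TopologicalSpace X] (A : I → Set X) : Prop :=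
  ∃ U : I → Set X, DiscreteFam U ∧ (∀ i, FunOpen (U i)) ∧ ∀ i, closure (A i) ⊆ U i

/-- A collection of sets is sfd (viewed as a family indexed by itself). -/
def SFDSet {X : Type*} [TopologicalSpace X] (𝒜 : Set (Set X)) : Prop :=
  SFDFam (fun b : 𝒜 => (b : Set X))

/-- A collection of sets is a well sfd-family. -/
def WellSFDSet {X : Type*} [TopologicalSpace X] (𝒜 : Set (Set X)) : Prop :=
  ∃ U F : 𝒜 → Set X, DiscreteFam U ∧ DiscreteFam F ∧
    (∀ b, FunOpen (U b)) ∧ (∀ b, FunClosed (F b)) ∧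
    ∀ b : 𝒜, (b : Set X) ⊆ F b ∧ F b ⊆ U b

/-- An indexed family is σ-sfd if the index set splits into countably many pieces
on each of which the family is sfd. -/
def SigmaSFDFam {X I : Type*} [TopologicalSpace X] (A : I → Set X) : Prop :=
  ∃ J : ℕ → Set I, (∀ n, SFDFam (fun i : J n => A i)) ∧ (⋃ n, J n) = Set.univ

/-- `B` is a base for the mapping `f`: every preimage of an open set is a union
of members of `B`. -/
def IsBaseFor {X Y : Type*} [TopologicalSpace X] [TopologicalSpace Y]
    (B : Set (Set X)) (f : X → Y) : Prop :=
  ∀ V : Set Y, IsOpen V → ∃ S ⊆ B, f ⁻¹' V = ⋃₀ S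

/-- `f` has a σ-strongly-functionally-discrete base. -/
def SigmaSFD {X Y : Type*} [TopologicalSpace X] [TopologicalSpace Y] (f : X → Y) : Prop :=
  ∃ B : ℕ → Set (Set X), (∀ n, SFDSet (B n)) ∧ IsBaseFor (⋃ n, B n) f

/-- `f` has a σ-sfd base consisting of functionally ambiguous sets of class α. -/
noncomputable def SigmaSFDAmb {X Y : Type*} [TopologicalSpace X] [TopologicalSpace Y]
    (α : Ordinal) (f : X → Y) : Prop :=
  ∃ B : ℕ → Set (Set X), (∀ n, SFDSet (B n)) ∧ (∀ n, ∀ b ∈ B n, FunAmb α b) ∧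
    IsBaseFor (⋃ n, B n) f

/-- `f` belongs to the α'th functionally Lebesgue class. -/
noncomputable def LebClass {X Y : Type*} [TopologicalSpace X] [TopologicalSpace Y]
    (α : Ordinal) (f : X → Y) : Prop :=
  ∀ V : Set Y, IsOpen V → f ⁻¹' V ∈ FunAdd X α

/-- `Y` has a σ-disjoint base. -/
def SigmaDisjointBase (Y : Type*) [TopologicalSpace Y] : Prop :=
  ∃ V : ℕ → Set (Set Y), (∀ m, (V m).PairwiseDisjoint id) ∧
    TopologicalSpace.IsTopologicalBasis (⋃ m, V m)


section Aux

variable {X : Type*} [TopologicalSpace X]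

lemma funClosed_iInter {B : ℕ → Set X} (h : ∀ n, FunClosed (B n)) :
    FunClosed (⋂ n, B n) := by
  choose φ hφc hφ using h
  set ψ : ℕ → X → ℝ := fun n x => (1/2 : ℝ)^n * min |φ n x| 1 with hψ
  have hψc : ∀ n, Continuous (ψ n) := fun n =>
    continuous_const.mul ((hφc n).abs.min continuous_const)
  have hψ0 : ∀ n x, 0 ≤ ψ n x := fun n x =>
    mul_nonneg (by positivity) (le_min (abs_nonneg _) one_pos.le)
  have hψb : ∀ n x, ‖ψ n x‖ ≤ (1/2:ℝ)^n := by
    intro n x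
    rw [Real.norm_eq_abs, abs_of_nonneg (hψ0 n x)]
    calc (1/2:ℝ)^n * min |φ n x| 1 ≤ (1/2:ℝ)^n * 1 :=
          mul_le_mul_of_nonneg_left (min_le_right _ _) (by positivity)
      _ = (1/2:ℝ)^n := mul_one _
  have hsum : Summable fun n => (1/2:ℝ)^n := summable_geometric_two
  refine ⟨fun x => ∑' n, ψ n x, continuous_tsum hψc hsum hψb, ?_⟩
  ext x
  simp only [mem_iInter, mem_preimage, mem_singleton_iff]
  constructor
  · intro hx
    have hz : ∀ n, ψ n x = 0 := by
      intro n
      have hφ0 : φ n x = 0 := by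
        have := hx n; rw [hφ n] at this; exact this
      simp [hψ, hφ0]
    simp [hz]
  · intro hx n
    have hSx : Summable fun n => ψ n x :=
      Summable.of_nonneg_of_le (fun n => hψ0 n x)
        (fun n => (le_abs_self _).trans (by rw [← Real.norm_eq_abs]; exact hψb n x)) hsum
    have h1 := Summable.le_tsum hSx n fun j _ => hψ0 j x
    rw [hx] at h1
    have h2 : ψ n x = 0 := le_antisymm h1 (hψ0 n x)
    rw [hφ n]
    show φ n x ∈ ({0} : Set ℝ)
    simp only [mem_singleton_iff]
    by_contra hne
    have hpos : 0 < min |φ n x| 1 := lt_min (abs_pos.mpr hne) one_pos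
    have : 0 < ψ n x := mul_pos (by positivity) hpos
    linarith

lemma funOpen_iUnion {A : ℕ → Set X} (h : ∀ n, FunOpen (A n)) :
    FunOpen (⋃ n, A n) := by
  show FunClosed (⋃ n, A n)ᶜ
  rw [compl_iUnion]
  exact funClosed_iInter h

lemma funMul_zero : FunMul X 0 = {F | FunClosed F} := by
  rw [FunMul, FunClassPair]; simp

lemma funAdd_zero : FunAdd X 0 = {U | FunOpen U} := by
  rw [FunAdd, FunClassPair]; simp

lemma funMul_ne {α : Ordinal} (hα : α ≠ 0) :
    FunMul X α =
      { A | ∃ f : ℕ → Set X, (∀ n, ∃ β, ∃ _ : β < α, f n ∈ FunAdd X β) ∧ A = ⋂ n, f n } := by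
  rw [FunMul, FunClassPair]; simp only [if_neg hα]; rfl

lemma funAdd_ne {α : Ordinal} (hα : α ≠ 0) :
    FunAdd X α =
      { A | ∃ f : ℕ → Set X, (∀ n, ∃ β, ∃ _ : β < α, f n ∈ FunMul X β) ∧ A = ⋃ n, f n } := by
  rw [FunAdd, FunClassPair]; simp only [if_neg hα]; rfl

lemma funCompl (α : Ordinal) :
    (∀ A : Set X, A ∈ FunMul X α → Aᶜ ∈ FunAdd X α) ∧
    (∀ A : Set X, A ∈ FunAdd X α → Aᶜ ∈ FunMul X α) := by
  induction α using Ordinal.induction with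
  | h α IH =>
    rcases eq_or_ne α 0 with rfl | hα
    · rw [funMul_zero, funAdd_zero]
      constructor
      · intro A hA
        show FunClosed Aᶜᶜ
        rwa [compl_compl]
      · intro A hA
        exact hA
    · rw [funMul_ne hα, funAdd_ne hα]
      constructor
      · rintro A ⟨F, hF, rfl⟩
        rw [compl_iInter]
        exact ⟨fun n => (F n)ᶜ, fun n => by
          obtain ⟨β, hβ, hm⟩ := hF n
          exact ⟨β, hβ, (IH β hβ).2 _ hm⟩, rfl⟩
      · rintro A ⟨F, hF, rfl⟩
        rw [compl_iUnion]
        exact ⟨fun n => (F n)ᶜ, fun n => by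
          obtain ⟨β, hβ, hm⟩ := hF n
          exact ⟨β, hβ, (IH β hβ).1 _ hm⟩, rfl⟩

lemma funAdd_iUnion {α : Ordinal} {A : ℕ → Set X}
    (h : ∀ n, A n ∈ FunAdd X α) : (⋃ n, A n) ∈ FunAdd X α := by
  rcases eq_or_ne α 0 with rfl | hα
  · rw [funAdd_zero] at h ⊢
    exact funOpen_iUnion h
  · rw [funAdd_ne hα] at h ⊢
    choose F hF hFA using h
    set e : ℕ ≃ ℕ × ℕ := (Denumerable.eqv (ℕ × ℕ)).symm with he
    refine ⟨fun k => F (e k).1 (e k).2, fun k => hF _ _, ?_⟩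
    ext x
    simp only [mem_iUnion]
    constructor
    · rintro ⟨n, hx⟩
      rw [hFA n] at hx
      obtain ⟨m, hxm⟩ := mem_iUnion.mp hx
      exact ⟨e.symm (n, m), by simpa using hxm⟩
    · rintro ⟨k, hx⟩
      refine ⟨(e k).1, ?_⟩
      rw [hFA]
      exact mem_iUnion.mpr ⟨(e k).2, hx⟩

end Aux

theorem stmt17 {X Y : Type*} [TopologicalSpace X] [TopologicalSpace Y]
    [PerfectlyNormalSpace Y] (α : Ordinal) (hα : α < ω₁)
    (f : ℕ → X → Y) (g : X → Y) (hf : ∀ n, LebClass α (f n))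
    (hconv : ∀ x, Filter.Tendsto (fun n => f n x) Filter.atTop (nhds (g x))) :
    LebClass (α + 1) g ∧
    ∀ (F : Set Y) (G : ℕ → Set Y), IsClosed F → (∀ n, IsOpen (G n)) → Antitone G →
      F = (⋂ n, G n) → F = (⋂ n, closure (G n)) →
      (g ⁻¹' F = ⋂ n, ⋃ k, ⋃ (_ : n < k), f k ⁻¹' G n) ∧
      g ⁻¹' F ∈ FunMul X (α + 1) := by
  
  have hsucc : α < α + 1 := by
    rw [Ordinal.add_one_eq_succ]; exact Order.lt_succ α
  have hne : (α + 1 : Ordinal) ≠ 0 := fun h => absurd (h ▸ hsucc : α < 0) (by simp)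
  have key : ∀ (F : Set Y) (G : ℕ → Set Y), IsClosed F → (∀ n, IsOpen (G n)) → Antitone G →
      F = (⋂ n, G n) → F = (⋂ n, closure (G n)) →
      (g ⁻¹' F = ⋂ n, ⋃ k, ⋃ (_ : n < k), f k ⁻¹' G n) ∧
      g ⁻¹' F ∈ FunMul X (α + 1) := by
    intro F G hFc hGop hGanti hFG hFclos
    have heq : g ⁻¹' F = ⋂ n, ⋃ k, ⋃ (_ : n < k), f k ⁻¹' G n := by
      ext x
      simp only [mem_preimage, mem_iInter, mem_iUnion, exists_prop]
      constructor
      · intro hx n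
        have hgx : g x ∈ G n := by
          rw [hFG] at hx; exact mem_iInter.mp hx n
        obtain ⟨N, hN⟩ := Filter.eventually_atTop.mp
          ((hconv x).eventually_mem ((hGop n).mem_nhds hgx))
        exact ⟨max N (n+1), by omega, hN _ (le_max_left _ _)⟩
      · intro hx
        suffices hcg : g x ∈ ⋂ n, closure (G n) by rw [hFclos]; exact hcg
        refine mem_iInter.2 fun n => mem_closure_of_frequently_of_tendsto ?_ (hconv x)
        rw [Filter.frequently_atTop]
        intro m
        obtain ⟨k, hk1, hk2⟩ := hx (max m n)
        exact ⟨k, le_trans (le_max_left m n) hk1.le, hGanti (le_max_right m n) hk2⟩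
    refine ⟨heq, ?_⟩
    have hA : ∀ n, (⋃ k, ⋃ (_ : n < k), f k ⁻¹' G n) ∈ FunAdd X α := by
      intro n
      have hrw : (⋃ k, ⋃ (_ : n < k), f k ⁻¹' G n) = ⋃ k, f (max k (n+1)) ⁻¹' G n := by
        ext x
        simp only [mem_iUnion, exists_prop]
        constructor
        · rintro ⟨k, hk, hx⟩
          exact ⟨k, by rwa [max_eq_left (by omega)]⟩
        · rintro ⟨k, hx⟩
          exact ⟨max k (n+1), by omega, hx⟩
      rw [hrw]
      exact funAdd_iUnion (fun k => hf _ _ (hGop n))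
    rw [heq, funMul_ne hne]
    exact ⟨fun n => ⋃ k, ⋃ (_ : n < k), f k ⁻¹' G n, fun n => ⟨α, hsucc, hA n⟩, rfl⟩
  refine ⟨?_, fun F G h1 h2 h3 h4 h5 => key F G h1 h2 h3 h4 h5⟩
  intro V hV
  have hFc : IsClosed Vᶜ := hV.isClosed_compl
  obtain ⟨U, hU, hUeq⟩ := (PerfectlyNormalSpace.closed_gdelta hFc).eq_iInter_nat
  have hsub : ∀ n, Vᶜ ⊆ U n := fun n => hUeq ▸ iInter_subset U n
  choose W hW hFW hclW using fun n => normal_exists_closure_subset hFc (hU n) (hsub n)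
  set G : ℕ → Set Y := fun n => ⋂ k ∈ Finset.range (n+1), W k with hGdef
  have hGW : ∀ n, G n ⊆ W n := fun n x hx => by
    simp only [hGdef, mem_iInter, Finset.mem_range] at hx
    exact hx n (by omega)
  have hGopen : ∀ n, IsOpen (G n) := fun n => isOpen_biInter_finset (fun k _ => hW k)
  have hGanti : Antitone G := by
    intro a b hab x hx
    simp only [hGdef, mem_iInter, Finset.mem_range] at hx ⊢
    exact fun k hk => hx k (by omega)
  have hFsubG : ∀ n, Vᶜ ⊆ G n := by
    intro n x hx
    simp only [hGdef, mem_iInter, Finset.mem_range]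
    exact fun k _ => hFW k hx
  have hclGU : ∀ n, closure (G n) ⊆ U n :=
    fun n => (closure_mono (hGW n)).trans (hclW n)
  have hFG : Vᶜ = ⋂ n, G n := by
    apply subset_antisymm (subset_iInter hFsubG)
    intro x hx
    rw [hUeq]
    exact mem_iInter.2 fun n =>
      hclGU n (subset_closure (mem_iInter.mp hx n))
  have hFclos : Vᶜ = ⋂ n, closure (G n) := by
    apply subset_antisymm
    · exact subset_iInter fun n => (hFsubG n).trans subset_closure
    · intro x hx
      rw [hUeq]
      exact mem_iInter.2 fun n => hclGU n (mem_iInter.mp hx n)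
  obtain ⟨-, hmem⟩ := key Vᶜ G hFc hGopen hGanti hFG hFclos
  have hVrw : g ⁻¹' V = (g ⁻¹' Vᶜ)ᶜ := by
    rw [preimage_compl, compl_compl]
  rw [hVrw]
  exact (funCompl (α + 1)).1 _ hmem
end

section
/- Let X be a topological space and Y a space with a σ-disjoint base. Then the class of mappings X → Y admitting a σ-sfd base is closed under pointwise limits of sequences: if each fₙ : X → Y has a σ-sfd base and fₙ → f pointwise, then f has a σ-sfd base. -/
open Set Topology Ordinal

theorem stmt18 {X Y : Type*} [TopologicalSpace X] [TopologicalSpace Y]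
    (hY : SigmaDisjointBase Y) (f : ℕ → X → Y) (g : X → Y)
    (hf : ∀ n, SigmaSFD (f n))
    (hconv : ∀ x, Filter.Tendsto (fun n => f n x) Filter.atTop (nhds (g x))) :
    SigmaSFD g := by
  classical
  obtain ⟨𝒱, hdisj, hbasis⟩ := hY
  have hf' : ∀ n, ∃ B : ℕ → Set (Set X), (∀ p, SFDSet (B p)) ∧ IsBaseFor (⋃ p, B p) (f n) := hf
  choose ℬ hsfd hbase using hf'
  have hsfd' : ∀ n p, ∃ U : ↥(ℬ n p) → Set X, DiscreteFam U ∧ (∀ i, FunOpen (U i)) ∧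
      ∀ i : ↥(ℬ n p), closure (i : Set X) ⊆ U i := hsfd
  choose U hUdisc hUopen hUcl using hsfd'
  -- members of a disjoint family that meet are equal
  have hdis : ∀ m, ∀ W ∈ 𝒱 m, ∀ W' ∈ 𝒱 m, (W ∩ W').Nonempty → W = W' := by
    intro m W hW W' hW' hne
    by_contra hne'
    exact hne.ne_empty (Set.disjoint_iff_inter_eq_empty.1 (hdisj m hW hW' hne'))
  -- key lemma: if f n x is eventually in W ∈ 𝒱 m and g x ∈ ⋃₀ 𝒱 m, then g x ∈ W
  have hmemW : ∀ m (W : Set Y), W ∈ 𝒱 m → ∀ k x, (∀ n, k ≤ n → f n x ∈ W) →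
      g x ∈ ⋃₀ 𝒱 m → g x ∈ W := by
    intro m W hW k x hA hO
    obtain ⟨W', hW', hg⟩ := hO
    have hW'o : IsOpen W' := hbasis.isOpen (Set.mem_iUnion.2 ⟨m, hW'⟩)
    have hev : ∀ᶠ n in Filter.atTop, f n x ∈ W' :=
      (hconv x).eventually_mem (hW'o.mem_nhds hg)
    obtain ⟨N, hN⟩ := Filter.eventually_atTop.1 hev
    have hWW' : W = W' := hdis m W hW W' hW'
      ⟨f (max N k) x, hA _ (le_max_right _ _), hN _ (le_max_left _ _)⟩
    rwa [hWW']
  -- the candidate base pieces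
  set A : Set Y → ℕ → Set X := fun W k => {x | ∀ n, k ≤ n → f n x ∈ W} with hAdef
  set D : ℕ → ℕ → ℕ → Set (Set X) := fun k p m =>
    {d | ∃ W ∈ 𝒱 m, ∃ B ∈ ℬ k p, B ⊆ f k ⁻¹' W ∧ d = B ∩ A W k ∩ g ⁻¹' ⋃₀ 𝒱 m} with hDdef
  -- each piece is sfd
  have hDsfd : ∀ k p m, SFDSet (D k p m) := by
    intro k p m
    have hch : ∀ d : ↥(D k p m), ∃ W, W ∈ 𝒱 m ∧ ∃ B, B ∈ ℬ k p ∧ B ⊆ f k ⁻¹' W ∧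
        (d : Set X) = B ∩ A W k ∩ g ⁻¹' ⋃₀ 𝒱 m := by
      intro d
      obtain ⟨W, hW, B, hB, h1, h2⟩ := d.2
      exact ⟨W, hW, B, hB, h1, h2⟩
    choose W hW B hB hBW hdval using hch
    refine ⟨fun d => U k p ⟨B d, hB d⟩, ?_, fun d => hUopen k p _, fun d => ?_⟩
    · intro x
      obtain ⟨V, hVo, hxV, hV⟩ := hUdisc k p x
      refine ⟨V, hVo, hxV, fun d d' h1 h2 => ?_⟩
      have hBB : (⟨B d, hB d⟩ : ↥(ℬ k p)) = ⟨B d', hB d'⟩ := hV _ _ h1 h2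
      have hBB' : B d = B d' := congrArg Subtype.val hBB
      rcases (B d).eq_empty_or_nonempty with he | ⟨y, hy⟩
      · apply Subtype.ext
        have e1 : (d : Set X) = ∅ := by
          rw [hdval d]
          apply Set.eq_empty_of_subset_empty
          rw [← he]
          exact fun z hz => hz.1.1
        have e2 : (d' : Set X) = ∅ := by
          rw [hdval d']
          apply Set.eq_empty_of_subset_empty
          rw [← hBB', ← he]
          exact fun z hz => hz.1.1
        rw [e1, e2]
      · have hWW : W d = W d' := by
          apply hdis m _ (hW d) _ (hW d')
          refine ⟨f k y, hBW d hy, hBW d' ?_⟩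
          rwa [← hBB']
        apply Subtype.ext
        rw [hdval d, hdval d', hBB', hWW]
    · calc closure (d : Set X) ⊆ closure (B d) :=
            closure_mono (by rw [hdval d]; exact fun z hz => hz.1.1)
        _ ⊆ U k p ⟨B d, hB d⟩ := hUcl k p ⟨B d, hB d⟩
  refine ⟨fun n => D ((Denumerable.eqv (ℕ × ℕ × ℕ)).symm n).1
      ((Denumerable.eqv (ℕ × ℕ × ℕ)).symm n).2.1
      ((Denumerable.eqv (ℕ × ℕ × ℕ)).symm n).2.2,
      fun n => hDsfd _ _ _, ?_⟩
  intro V hV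
  refine ⟨⋃ k, ⋃ p, ⋃ m, {d | d ∈ D k p m ∧ d ⊆ g ⁻¹' V}, ?_, ?_⟩
  · intro d hd
    simp only [Set.mem_iUnion, Set.mem_setOf_eq] at hd
    obtain ⟨k, p, m, hd, -⟩ := hd
    exact Set.mem_iUnion.2 ⟨(Denumerable.eqv (ℕ × ℕ × ℕ)) (k, p, m), by simpa using hd⟩
  · apply Set.Subset.antisymm
    · -- g ⁻¹' V ⊆ ⋃₀ S
      intro x hx
      obtain ⟨W, hWb, hgW, hWV⟩ := hbasis.exists_subset_of_mem_open hx hV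
      obtain ⟨m, hWm⟩ := Set.mem_iUnion.1 hWb
      have hWo : IsOpen W := hbasis.isOpen hWb
      obtain ⟨k, hk⟩ := Filter.eventually_atTop.1
        ((hconv x).eventually_mem (hWo.mem_nhds hgW))
      obtain ⟨T, hT, hTeq⟩ := hbase k W hWo
      have hxk : x ∈ f k ⁻¹' W := hk k le_rfl
      rw [hTeq] at hxk
      obtain ⟨B, hBT, hxB⟩ := hxk
      obtain ⟨p, hBp⟩ := Set.mem_iUnion.1 (hT hBT)
      refine ⟨B ∩ A W k ∩ g ⁻¹' ⋃₀ 𝒱 m, ?_, ?_⟩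
      · simp only [Set.mem_iUnion, Set.mem_setOf_eq]
        refine ⟨k, p, m, ⟨W, hWm, B, hBp, ?_, rfl⟩, ?_⟩
        · rw [hTeq]
          exact fun z hz => ⟨B, hBT, hz⟩
        · intro z hz
          exact hWV (hmemW m W hWm k z hz.1.2 hz.2)
      · exact ⟨⟨hxB, fun n hn => hk n hn⟩, W, hWm, hgW⟩
    · intro x hx
      obtain ⟨d, hd, hxd⟩ := hx
      simp only [Set.mem_iUnion, Set.mem_setOf_eq] at hd
      obtain ⟨k, p, m, -, hsub⟩ := hd
      exact hsub hxd
end
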